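/- Let (Γ, g) be a vertex-weighted metric graph of genus g(Γ), and let F be a tropical meromorphic function on Γ (a continuous piecewise affine-linear function with integer slopes) such that div(F) + K_Γ ≥ 0. Then for all points x ∈ Γ and all tangent directions v at x, the slope satisfies |d_v F(x)| ≤ 2g(Γ) − 1. If moreover K_Γ is effective (Γ has no genus-zero leaves), then |d_v F(x)| ≤ 2g(Γ) − 2. -/

import Mathlib

open Finset

/-- The valency (degree) of a vertex in a finite multigraph whose edges are recorded as
ordered pairs of endpoints; a loop edge counts twice. -/
def valency {V E : Type*} [Fintype E] [DecidableEq V] (ends : E → V × V) (v : V) : ℕ :=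
  ∑ e : E, ((if (ends e).1 = v then 1 else 0) + (if (ends e).2 = v then 1 else 0))

/-- Adjacency relation determined by the edge set. -/
def Adj {V E : Type*} (ends : E → V × V) (x y : V) : Prop :=
  ∃ e : E, ends e = (x, y) ∨ ends e = (y, x)

/-- Connectivity of a finite multigraph. -/
def GraphConnected {V E : Type*} (ends : E → V × V) : Prop :=
  Nonempty V ∧ ∀ x y : V, Relation.ReflTransGen (Adj ends) x y

/-- The genus of a connected vertex-weighted graph: `h₁(Γ) + Σ_x g(x)` where
`h₁(Γ) = #E - #V + 1`. -/
def graphGenus (V E : Type*) [Fintype V] [Fintype E] (w : V → ℕ) : ℤ :=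
  (Fintype.card E : ℤ) - (Fintype.card V : ℤ) + 1 + ∑ v : V, (w v : ℤ)


/-- The order `ord_v(F)` of a tropical meromorphic function at a vertex `v`: the sum of
the incoming slopes of `F` at `v`.  Here `s e` is the slope of `F` along the edge `e`
oriented from `(ends e).1` to `(ends e).2`, so the incoming slope at `(ends e).1` is
`-(s e)` and the incoming slope at `(ends e).2` is `s e`. -/
def ordAt {V E : Type*} [Fintype E] [DecidableEq V]
    (ends : E → V × V) (s : E → ℤ) (v : V) : ℤ :=
  ∑ e : E, ((if (ends e).1 = v then -(s e) else 0) + (if (ends e).2 = v then s e else 0))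

section helpers

variable {V E : Type*} [Fintype V] [Fintype E] [DecidableEq V]

private def reachN (ends : E → V × V) (S : Finset V) : ℕ → V → Prop
  | 0, v => v ∉ S
  | n+1, v => v ∉ S ∨ ∃ u, Adj ends u v ∧ reachN ends S n u

private lemma exists_reachN (ends : E → V × V) (hconn : GraphConnected ends) (S : Finset V)
    {v0 : V} (hv0 : v0 ∉ S) (v : V) : ∃ n, reachN ends S n v := by
  have h := hconn.2 v0 v
  induction h with
  | refl => exact ⟨0, hv0⟩
  | tail _ hbc ih =>
    obtain ⟨n, hn⟩ := ih
    exact ⟨n + 1, Or.inr ⟨_, hbc, hn⟩⟩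

private lemma card_le_card_touching (ends : E → V × V) (hconn : GraphConnected ends)
    (S : Finset V) {v0 : V} (hv0 : v0 ∉ S)
    [DecidablePred fun e : E => (ends e).1 ∈ S ∨ (ends e).2 ∈ S] :
    S.card ≤ (univ.filter fun e : E => (ends e).1 ∈ S ∨ (ends e).2 ∈ S).card := by
  classical
  rcases S.eq_empty_or_nonempty with rfl | ⟨vS, hvS⟩
  · simp
  have hex : ∀ v, ∃ n, reachN ends S n v := exists_reachN ends hconn S hv0
  set d : V → ℕ := fun v => Nat.find (hex v) with hd
  have key : ∀ v ∈ S, ∃ e : E,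
      ((ends e).1 = v ∧ d (ends e).2 < d v) ∨ ((ends e).2 = v ∧ d (ends e).1 < d v) := by
    intro v hv
    have hspec : reachN ends S (d v) v := Nat.find_spec (hex v)
    cases hn : d v with
    | zero => rw [hn] at hspec; exact absurd hv hspec
    | succ n =>
      rw [hn] at hspec
      rcases hspec with h | ⟨u, ⟨e, he⟩, hu⟩
      · exact absurd hv h
      · have hdu : d u ≤ n := Nat.find_min' (hex u) hu
        rcases he with he | he
        · refine ⟨e, Or.inr ⟨?_, ?_⟩⟩ <;> rw [he] <;> simp <;> omega
        · refine ⟨e, Or.inl ⟨?_, ?_⟩⟩ <;> rw [he] <;> simp <;> omega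
  haveI : Nonempty E := ⟨(key vS hvS).choose⟩
  set f : V → E := fun v => if h : v ∈ S then (key v h).choose else Classical.arbitrary E with hfdef
  have hfP : ∀ v (h : v ∈ S),
      ((ends (f v)).1 = v ∧ d (ends (f v)).2 < d v) ∨
      ((ends (f v)).2 = v ∧ d (ends (f v)).1 < d v) := by
    intro v h
    simp only [hfdef, dif_pos h]
    exact (key v h).choose_spec
  apply Finset.card_le_card_of_injOn f
  · intro v hv
    simp only [Finset.mem_coe, Finset.mem_filter, Finset.mem_univ, true_and]
    rcases hfP v hv with ⟨h1, _⟩ | ⟨h2, _⟩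
    · exact Or.inl (by rw [h1]; exact hv)
    · exact Or.inr (by rw [h2]; exact hv)
  · intro v1 h1 v2 h2 heq
    rcases hfP v1 h1 with ⟨a1, b1⟩ | ⟨a1, b1⟩ <;>
      rcases hfP v2 h2 with ⟨a2, b2⟩ | ⟨a2, b2⟩ <;>
      rw [heq] at a1 b1
    · exact a1.symm.trans a2
    · rw [a2] at b1; rw [a1] at b2; omega
    · rw [a2] at b1; rw [a1] at b2; omega
    · exact a1.symm.trans a2

end helpers
private lemma slope_le {V E : Type*} [Fintype V] [Fintype E] [DecidableEq V]
    (ends : E → V × V)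
    (w : V → ℕ) (len : E → ℝ) (hlen : ∀ e, 0 < len e)
    (hconn : GraphConnected ends)
    (F : V → ℝ) (s : E → ℤ)
    (hslope : ∀ e : E, F (ends e).2 - F (ends e).1 = (s e : ℝ) * len e)
    (hcanon : ∀ v : V,
      0 ≤ ordAt ends s v + (2 * (w v : ℤ) - 2 + (valency ends v : ℤ)))
    (e0 : E) :
    s e0 ≤ 2 * graphGenus V E w - 1 ∧
      ((∀ v : V, 0 ≤ 2 * (w v : ℤ) - 2 + (valency ends v : ℤ)) →
        s e0 ≤ 2 * graphGenus V E w - 2) := by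
  classical
  -- total sums
  have hsum_ord : ∑ v : V, ordAt ends s v = 0 := by
    simp only [ordAt]
    rw [Finset.sum_comm]
    simp [Finset.sum_add_distrib, Finset.sum_ite_eq]
  have hsum_val : ∑ v : V, (valency ends v : ℤ) = 2 * (Fintype.card E : ℤ) := by
    simp only [valency]
    push_cast
    rw [Finset.sum_comm]
    simp [Finset.sum_add_distrib, Finset.sum_ite_eq, Finset.card_univ, two_mul]
    ring
  have HW : ∀ (B : Finset V), ∑ v ∈ B, (2 * (w v : ℤ) - 2 + (valency ends v : ℤ))
      = 2 * (∑ v ∈ B, (w v : ℤ)) - 2 * B.card + ∑ v ∈ B, (valency ends v : ℤ) := by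
    intro B
    rw [Finset.sum_add_distrib, Finset.sum_sub_distrib, ← Finset.mul_sum, Finset.sum_const]
    push_cast
    ring
  have hg : 1 ≤ graphGenus V E w := by
    have h0 : (0:ℤ) ≤ ∑ v : V, (ordAt ends s v + (2 * (w v : ℤ) - 2 + (valency ends v : ℤ))) :=
      Finset.sum_nonneg fun v _ => hcanon v
    rw [Finset.sum_add_distrib, hsum_ord, HW univ, hsum_val, Finset.card_univ] at h0
    unfold graphGenus
    linarith
  by_cases hs0 : s e0 ≤ 0
  · exact ⟨by linarith, fun _ => by linarith⟩
  push_neg at hs0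
  -- the sublevel set below the top endpoint of e0
  set t := (ends e0).2 with ht
  set u := (ends e0).1 with hu
  have hut : F u < F t := by
    have h := hslope e0
    have hl := hlen e0
    have hs1 : (1:ℝ) ≤ (s e0 : ℝ) := by exact_mod_cast hs0
    nlinarith
  set A : Finset V := univ.filter (fun v => F v < F t) with hA
  have huA : u ∈ A := by simp [hA, hut]
  have htA : t ∉ A := by simp [hA]
  set cE : E → ℤ := fun e =>
    (if (ends e).1 ∈ A then -(s e) else 0) + (if (ends e).2 ∈ A then s e else 0) with hcE
  set iE : E → ℤ := fun e => if (ends e).1 ∈ A ∧ (ends e).2 ∈ A then 1 else 0 with hiE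
  set jE : E → ℤ := fun e => if (ends e).1 ∉ A ∧ (ends e).2 ∉ A then 1 else 0 with hjE
  set bE : E → ℤ := fun e => if ((ends e).1 ∈ A ↔ (ends e).2 ∈ A) then 0 else 1 with hbE
  -- per-edge facts
  have f1 : ∀ e, iE e + jE e + bE e = 1 := by
    intro e
    by_cases h1 : (ends e).1 ∈ A <;> by_cases h2 : (ends e).2 ∈ A <;> simp [hiE, hjE, hbE, h1, h2]
  have f2 : ∀ e, (if (ends e).1 ∈ A then (1:ℤ) else 0) + (if (ends e).2 ∈ A then 1 else 0)
      = 2 * iE e + bE e := by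
    intro e
    by_cases h1 : (ends e).1 ∈ A <;> by_cases h2 : (ends e).2 ∈ A <;>
      simp [hiE, hbE, h1, h2]
  have f2' : ∀ e, (if (ends e).1 ∉ A then (1:ℤ) else 0) + (if (ends e).2 ∉ A then 1 else 0)
      = 2 * jE e + bE e := by
    intro e
    by_cases h1 : (ends e).1 ∈ A <;> by_cases h2 : (ends e).2 ∈ A <;>
      simp [hjE, hbE, h1, h2]
  have slope_pos : ∀ e, (ends e).1 ∈ A → (ends e).2 ∉ A → 1 ≤ s e := by
    intro e h1 h2
    simp only [hA, Finset.mem_filter, Finset.mem_univ, true_and, not_lt] at h1 h2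
    have h := hslope e
    have hl := hlen e
    by_contra hc
    push_neg at hc
    have hc' : s e ≤ 0 := by omega
    have : (s e : ℝ) ≤ 0 := by exact_mod_cast hc'
    nlinarith
  have slope_neg : ∀ e, (ends e).1 ∉ A → (ends e).2 ∈ A → s e ≤ -1 := by
    intro e h1 h2
    simp only [hA, Finset.mem_filter, Finset.mem_univ, true_and, not_lt] at h1 h2
    have h := hslope e
    have hl := hlen e
    by_contra hc
    push_neg at hc
    have hc' : 0 ≤ s e := by omega
    have : (0:ℝ) ≤ (s e : ℝ) := by exact_mod_cast hc'
    nlinarith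
  have f3 : ∀ e, cE e ≤ -bE e := by
    intro e
    by_cases h1 : (ends e).1 ∈ A <;> by_cases h2 : (ends e).2 ∈ A <;>
      simp [hcE, hbE, h1, h2]
    · exact slope_pos e h1 h2
    · exact slope_neg e h1 h2
  have f4 : bE e0 = 1 := by
    simp [hbE, ← hu, ← ht, huA, htA]
  have f5 : cE e0 = -(s e0) := by
    simp [hcE, ← hu, ← ht, huA, htA]
  have fb0 : ∀ e, 0 ≤ bE e := by
    intro e; simp only [hbE]; split <;> norm_num
  -- sum identities
  have S1 : ∑ v ∈ A, ordAt ends s v = ∑ e : E, cE e := by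
    simp only [ordAt]
    rw [Finset.sum_comm]
    refine Finset.sum_congr rfl fun e _ => ?_
    rw [Finset.sum_add_distrib, Finset.sum_ite_eq, Finset.sum_ite_eq]
  have S2 : ∑ v ∈ A, (valency ends v : ℤ) = ∑ e : E, (2 * iE e + bE e) := by
    simp only [valency]
    push_cast
    rw [Finset.sum_comm]
    refine Finset.sum_congr rfl fun e _ => ?_
    rw [Finset.sum_add_distrib, Finset.sum_ite_eq, Finset.sum_ite_eq]
    exact f2 e
  have S3 : ∑ v ∈ Aᶜ, (valency ends v : ℤ) = ∑ e : E, (2 * jE e + bE e) := by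
    simp only [valency]
    push_cast
    rw [Finset.sum_comm]
    refine Finset.sum_congr rfl fun e _ => ?_
    rw [Finset.sum_add_distrib, Finset.sum_ite_eq, Finset.sum_ite_eq]
    simp only [Finset.mem_compl]
    exact f2' e
  have S4 : ∑ e : E, cE e ≤ -(s e0) - (∑ e : E, bE e) + 1 := by
    rw [← Finset.add_sum_erase _ cE (Finset.mem_univ e0),
        ← Finset.add_sum_erase _ bE (Finset.mem_univ e0), f4, f5]
    have := Finset.sum_le_sum (fun e (_ : e ∈ Finset.univ.erase e0) => f3 e)
    rw [Finset.sum_neg_distrib] at this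
    linarith
  -- injection bound
  have S5 : (Aᶜ.card : ℤ) ≤ ∑ e : E, (jE e + bE e) := by
    have hne : u ∉ Aᶜ := by simp [huA]
    have h := card_le_card_touching ends hconn Aᶜ hne
    have hcard : ((Finset.univ.filter fun e : E =>
        (ends e).1 ∈ Aᶜ ∨ (ends e).2 ∈ Aᶜ).card : ℤ) = ∑ e : E, (jE e + bE e) := by
      rw [Finset.card_filter]
      push_cast
      refine Finset.sum_congr rfl fun e _ => ?_
      simp only [Finset.mem_compl]
      by_cases h1 : (ends e).1 ∈ A <;> by_cases h2 : (ends e).2 ∈ A <;>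
        simp [hjE, hbE, h1, h2]
    calc (Aᶜ.card : ℤ) ≤ ((Finset.univ.filter fun e : E =>
        (ends e).1 ∈ Aᶜ ∨ (ends e).2 ∈ Aᶜ).card : ℤ) := by exact_mod_cast h
      _ = _ := hcard
  -- sum of hcanon over A
  have HA : (0:ℤ) ≤ (∑ e : E, cE e) + (2 * (∑ v ∈ A, (w v : ℤ)) - 2 * A.card
      + ∑ e : E, (2 * iE e + bE e)) := by
    have h0 : (0:ℤ) ≤ ∑ v ∈ A, (ordAt ends s v + (2 * (w v : ℤ) - 2 + (valency ends v : ℤ))) :=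
      Finset.sum_nonneg fun v _ => hcanon v
    rw [Finset.sum_add_distrib, S1, HW A, S2] at h0
    linarith
  -- global identities
  have G1 : (Fintype.card E : ℤ) = (∑ e : E, iE e) + (∑ e : E, jE e) + (∑ e : E, bE e) := by
    rw [← Finset.sum_add_distrib, ← Finset.sum_add_distrib]
    rw [show (∑ e : E, (iE e + jE e + bE e)) = ∑ e : E, (1:ℤ) from
      Finset.sum_congr rfl fun e _ => f1 e]
    simp [Finset.card_univ]
  have G2 : (Fintype.card V : ℤ) = (A.card : ℤ) + (Aᶜ.card : ℤ) := by
    exact_mod_cast (Finset.card_add_card_compl A).symm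
  have G3 : ∑ v : V, (w v : ℤ) = (∑ v ∈ A, (w v : ℤ)) + ∑ v ∈ Aᶜ, (w v : ℤ) :=
    (Finset.sum_add_sum_compl A _).symm
  have G4 : (0:ℤ) ≤ ∑ v ∈ Aᶜ, (w v : ℤ) := Finset.sum_nonneg fun v _ => by positivity
  have G5 : (1:ℤ) ≤ ∑ e : E, bE e := by
    have := Finset.single_le_sum (fun e (_ : e ∈ Finset.univ) => fb0 e) (Finset.mem_univ e0)
    omega
  have hsum : (∑ e : E, (2 * iE e + bE e)) = 2 * (∑ e : E, iE e) + (∑ e : E, bE e) := by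
    rw [Finset.sum_add_distrib, ← Finset.mul_sum]
  have hsum' : (∑ e : E, (2 * jE e + bE e)) = 2 * (∑ e : E, jE e) + (∑ e : E, bE e) := by
    rw [Finset.sum_add_distrib, ← Finset.mul_sum]
  have hsum'' : (∑ e : E, (jE e + bE e)) = (∑ e : E, jE e) + (∑ e : E, bE e) := by
    rw [Finset.sum_add_distrib]
  rw [hsum] at HA S2
  rw [hsum''] at S5
  unfold graphGenus
  constructor
  · linarith
  · intro heff
    have HC : (0:ℤ) ≤ 2 * (∑ v ∈ Aᶜ, (w v : ℤ)) - 2 * Aᶜ.card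
        + (2 * (∑ e : E, jE e) + (∑ e : E, bE e)) := by
      have h0 : (0:ℤ) ≤ ∑ v ∈ Aᶜ, (2 * (w v : ℤ) - 2 + (valency ends v : ℤ)) :=
        Finset.sum_nonneg fun v _ => heff v
      rw [HW Aᶜ, S3, hsum'] at h0
      linarith
    linarith
private lemma valency_swap {V E : Type*} [Fintype E] [DecidableEq V]
    (ends : E → V × V) (v : V) :
    valency (fun e => ((ends e).2, (ends e).1)) v = valency ends v := by
  unfold valency
  exact Finset.sum_congr rfl fun e _ => add_comm _ _

private lemma ordAt_swap {V E : Type*} [Fintype E] [DecidableEq V]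
    (ends : E → V × V) (s : E → ℤ) (v : V) :
    ordAt (fun e => ((ends e).2, (ends e).1)) (fun e => -(s e)) v = ordAt ends s v := by
  unfold ordAt
  refine Finset.sum_congr rfl fun e _ => ?_
  simp only [neg_neg]
  exact add_comm _ _

private lemma conn_swap {V E : Type*} (ends : E → V × V) (hconn : GraphConnected ends) :
    GraphConnected (fun e => ((ends e).2, (ends e).1)) := by
  refine ⟨hconn.1, fun x y => Relation.ReflTransGen.mono ?_ x y (hconn.2 x y)⟩
  rintro a b ⟨e, h | h⟩
  · exact ⟨e, Or.inr (by rw [show (fun e => ((ends e).2, (ends e).1)) e = ((ends e).2, (ends e).1) from rfl, h])⟩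
  · exact ⟨e, Or.inl (by rw [show (fun e => ((ends e).2, (ends e).1)) e = ((ends e).2, (ends e).1) from rfl, h])⟩
/-- Let `(Γ, g)` be a vertex-weighted metric graph of genus `g(Γ)` (modelled,
after subdivision, by a connected loopless multigraph with positive edge lengths, on whose
edges the tropical meromorphic function `F` is affine with integer slopes `s e`).  If
`div(F) + K_Γ ≥ 0`, i.e. `ord_v(F) + (2 g(v) - 2 + deg v) ≥ 0` at every vertex (this is
automatic, with value `0`, at interior points of edges), then every slope of `F` satisfies
`|d_v F(x)| ≤ 2 g(Γ) − 1`; and if moreover `K_Γ` is effective then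
`|d_v F(x)| ≤ 2 g(Γ) − 2`. -/
theorem slope_bound {V E : Type*} [Fintype V] [Fintype E] [DecidableEq V]
    (ends : E → V × V) (hloopfree : ∀ e : E, (ends e).1 ≠ (ends e).2)
    (w : V → ℕ) (len : E → ℝ) (hlen : ∀ e, 0 < len e)
    (hconn : GraphConnected ends)
    (F : V → ℝ) (s : E → ℤ)
    (hslope : ∀ e : E, F (ends e).2 - F (ends e).1 = (s e : ℝ) * len e)
    (hcanon : ∀ v : V,
      0 ≤ ordAt ends s v + (2 * (w v : ℤ) - 2 + (valency ends v : ℤ))) :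
    (∀ e : E, |s e| ≤ 2 * graphGenus V E w - 1) ∧
    ((∀ v : V, 0 ≤ 2 * (w v : ℤ) - 2 + (valency ends v : ℤ)) →
      ∀ e : E, |s e| ≤ 2 * graphGenus V E w - 2) := by

  have h1 := slope_le ends w len hlen hconn F s hslope hcanon
  have hslope' : ∀ e : E,
      F ((fun e => ((ends e).2, (ends e).1)) e).2 - F ((fun e => ((ends e).2, (ends e).1)) e).1
        = ((fun e => -(s e)) e : ℤ) * len e := by
    intro e
    have := hslope e
    push_cast
    linarith
  have hcanon' : ∀ v : V, 0 ≤ ordAt (fun e => ((ends e).2, (ends e).1)) (fun e => -(s e)) v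
      + (2 * (w v : ℤ) - 2 + (valency (fun e => ((ends e).2, (ends e).1)) v : ℤ)) := by
    intro v
    rw [ordAt_swap, valency_swap]
    exact hcanon v
  have h2 := slope_le (fun e => ((ends e).2, (ends e).1)) w len hlen (conn_swap ends hconn)
    F (fun e => -(s e)) hslope' hcanon'
  constructor
  · intro e
    rw [abs_le]
    refine ⟨?_, (h1 e).1⟩
    have := (h2 e).1
    linarith
  · intro heff e
    rw [abs_le]
    have heff' : ∀ v : V, 0 ≤ 2 * (w v : ℤ) - 2
        + (valency (fun e => ((ends e).2, (ends e).1)) v : ℤ) := by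
      intro v; rw [valency_swap]; exact heff v
    refine ⟨?_, (h1 e).2 heff⟩
    have := (h2 e).2 heff'
    linarith
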